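/- arXiv:2202.04792 — 2 statements merged into one kernel-verified Lean document; each statement's English description precedes it below -/
import Mathlib

section
/- Let R be a commutative Noetherian local ring and M a finitely generated R-module such that Tor_1^R(M, Tr M) = 0, where Tr M is the Auslander transpose of M. Then M is free. -/
open CategoryTheory IsLocalRing

noncomputable section

variable (R : Type) [CommRing R]

/-- `Tor_i^R(M,N)` as a type. -/
abbrev TorM (i : ℕ) (M N : Type) [AddCommGroup M] [Module R M]
    [AddCommGroup N] [Module R N] : Type :=
  ((Tor (ModuleCat R) i).obj (ModuleCat.of R M)).obj (ModuleCat.of R N)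

/-- `Ext^i_R(M,N)` as a type. -/
abbrev ExtM (i : ℕ) (M N : Type) [AddCommGroup M] [Module R M]
    [AddCommGroup N] [Module R N] : Type :=
  ((Ext R (ModuleCat R) i).obj (Opposite.op (ModuleCat.of R M))).obj (ModuleCat.of R N)

/-- `M` is isomorphic to its `q`-th syzygy `Ω^q M` in a minimal free resolution. -/
def IsPeriodicSyzygy [IsLocalRing R] (M : Type) [AddCommGroup M] [Module R M]
    (q : ℕ) : Prop :=
  ∃ (n : ℕ → ℕ) (d : ∀ i : ℕ, ((Fin (n (i + 1)) → R) →ₗ[R] (Fin (n i) → R)))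
    (g : (Fin (n 0) → R) →ₗ[R] M),
    Function.Surjective g ∧
    LinearMap.ker g = LinearMap.range (d 0) ∧
    (∀ i, LinearMap.ker (d i) = LinearMap.range (d (i + 1))) ∧
    LinearMap.ker g ≤ (maximalIdeal R) • (⊤ : Submodule R (Fin (n 0) → R)) ∧
    (∀ i, LinearMap.range (d i) ≤ (maximalIdeal R) • (⊤ : Submodule R (Fin (n i) → R))) ∧
    Nonempty (M ≃ₗ[R] LinearMap.range (d (q - 1)))

/-- `M` is locally free on the punctured spectrum of the local ring `R`. -/
def LocFreePunctured [IsLocalRing R] (M : Type) [AddCommGroup M] [Module R M] : Prop :=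
  ∀ (p : Ideal R) (_ : p.IsPrime), p ≠ maximalIdeal R →
    Module.Free (Localization.AtPrime p) (LocalizedModule p.primeCompl M)

/-- index type parametrizing all finitely generated `R`-modules (via presentations) -/
abbrev FGIdx := Σ n : ℕ, Submodule R (Fin n → R)

abbrev idxMod (x : FGIdx R) : Type := (Fin x.1 → R) ⧸ x.2

/-- relations (from short exact sequences) defining the Grothendieck group, ℚ-coefficients -/
def gRelQ : Set (FGIdx R →₀ ℚ) :=
  { v | ∃ (x y z : FGIdx R) (f : idxMod R x →ₗ[R] idxMod R y)
      (g : idxMod R y →ₗ[R] idxMod R z),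
      Function.Injective f ∧ Function.Surjective g ∧
      LinearMap.range f = LinearMap.ker g ∧
      v = Finsupp.single y 1 - Finsupp.single x 1 - Finsupp.single z 1 }

/-- relations defining the reduced Grothendieck group with ℚ-coefficients:
SES relations together with the class of `R` itself. -/
def gRelQbar : Set (FGIdx R →₀ ℚ) :=
  gRelQ R ∪ { v | ∃ x : FGIdx R, Nonempty (idxMod R x ≃ₗ[R] R) ∧ v = Finsupp.single x 1 }

/-- The reduced Grothendieck group with rational coefficients `Ḡ(R)_ℚ`. -/
abbrev GbarQ : Type := (FGIdx R →₀ ℚ) ⧸ Submodule.span ℚ (gRelQbar R)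

/-- `[N] = 0` in the reduced Grothendieck group with rational coefficients. -/
def ClassZeroQ (N : Type) [AddCommGroup N] [Module R N] : Prop :=
  ∀ x : FGIdx R, Nonempty (idxMod R x ≃ₗ[R] N) →
    (Submodule.Quotient.mk (p := Submodule.span ℚ (gRelQbar R))
      (Finsupp.single x 1) : GbarQ R) = 0

/-- relations (from short exact sequences) defining the Grothendieck group `G(R)` -/
def gRelZ : Set (FGIdx R →₀ ℤ) :=
  { v | ∃ (x y z : FGIdx R) (f : idxMod R x →ₗ[R] idxMod R y)
      (g : idxMod R y →ₗ[R] idxMod R z),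
      Function.Injective f ∧ Function.Surjective g ∧
      LinearMap.range f = LinearMap.ker g ∧
      v = Finsupp.single y 1 - Finsupp.single x 1 - Finsupp.single z 1 }

/-- The Grothendieck group `G(R)` of finitely generated `R`-modules. -/
abbrev GZ : Type := (FGIdx R →₀ ℤ) ⧸ Submodule.span ℤ (gRelZ R)

open Classical in
noncomputable def gcl (N : Type) [AddCommGroup N] [Module R N] : GZ R :=
  if h : ∃ x : FGIdx R, Nonempty (idxMod R x ≃ₗ[R] N) then
    Submodule.Quotient.mk (p := Submodule.span ℤ (gRelZ R)) (Finsupp.single h.choose 1)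
  else 0

/-- `[N] = 0` in the Grothendieck group `G(R)`. -/
def ClassZeroZ (N : Type) [AddCommGroup N] [Module R N] : Prop :=
  ∀ x : FGIdx R, Nonempty (idxMod R x ≃ₗ[R] N) →
    (Submodule.Quotient.mk (p := Submodule.span ℤ (gRelZ R))
      (Finsupp.single x 1) : GZ R) = 0

/-- the residue field of a local ring, as an `R`-module -/
abbrev resF [IsLocalRing R] : Type := R ⧸ (maximalIdeal R)

/-- `R` is a Gorenstein local ring of Krull dimension `d`
(characterized by `Ext^i_R(k,R) = 0` for `i ≠ d` and `Ext^d_R(k,R) ≅ k`). -/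
def IsGorensteinOfDim [IsLocalRing R] (d : ℕ) : Prop :=
  ringKrullDim R = d ∧
  (∀ i : ℕ, i ≠ d → Subsingleton (ExtM R i (resF R) R)) ∧
  Nonempty ((ExtM R d (resF R) R) ≃ₗ[R] resF R)

/-- `R` is a Cohen-Macaulay local ring of Krull dimension `d` (depth R = dim R = d,
depth computed via `Ext^i(k,R)`). -/
def IsCMOfDim [IsLocalRing R] (d : ℕ) : Prop :=
  ringKrullDim R = d ∧
  (∀ i : ℕ, i < d → Subsingleton (ExtM R i (resF R) R)) ∧
  Nontrivial (ExtM R d (resF R) R)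

/-- `ω` is a canonical module of the `d`-dimensional Cohen-Macaulay local ring `R`. -/
def IsCanonicalModule [IsLocalRing R] (d : ℕ) (ω : Type) [AddCommGroup ω] [Module R ω] : Prop :=
  Module.Finite R ω ∧
  (∀ i : ℕ, i ≠ d → Subsingleton (ExtM R i (resF R) ω)) ∧
  Nonempty ((ExtM R d (resF R) ω) ≃ₗ[R] resF R)

/-- `M` has depth `d` and is maximal Cohen-Macaulay over the `d`-dimensional local ring `R`
(depth computed via `Ext^i(k,M)`). -/
def IsMCM [IsLocalRing R] (d : ℕ) (M : Type) [AddCommGroup M] [Module R M] : Prop :=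
  (∀ i : ℕ, i < d → Subsingleton (ExtM R i (resF R) M)) ∧
  Nontrivial (ExtM R d (resF R) M)

/-- `M` has a free resolution of length at most `k` (so `pd_R M ≤ k`). -/
def PdLE (M : Type) [AddCommGroup M] [Module R M] (k : ℕ) : Prop :=
  ∃ (n : ℕ → ℕ) (d : ∀ i : ℕ, ((Fin (n (i + 1)) → R) →ₗ[R] (Fin (n i) → R)))
    (g : (Fin (n 0) → R) →ₗ[R] M),
    Function.Surjective g ∧
    LinearMap.ker g = LinearMap.range (d 0) ∧
    (∀ i, LinearMap.ker (d i) = LinearMap.range (d (i + 1))) ∧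
    (∀ i, k < i → n i = 0)

/-- `G` is a totally reflexive `R`-module. -/
def IsTotallyReflexive (G : Type) [AddCommGroup G] [Module R G] : Prop :=
  Module.Finite R G ∧
  Function.Bijective (Module.Dual.eval R G) ∧
  (∀ i : ℕ, 1 ≤ i → Subsingleton (ExtM R i G R)) ∧
  (∀ i : ℕ, 1 ≤ i → Subsingleton (ExtM R i (Module.Dual R G) R))

/-- `M` has a resolution by totally reflexive modules of length at most `g`
(so `Gdim_R M ≤ g`). -/
def GdimLE (M : Type) [AddCommGroup M] [Module R M] (g : ℕ) : Prop :=
  ∃ (G : ℕ → ModuleCat R) (d : ∀ i : ℕ, ((G (i + 1) : Type) →ₗ[R] (G i : Type)))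
    (ε : (G 0 : Type) →ₗ[R] M),
    (∀ i, IsTotallyReflexive R (G i)) ∧
    Function.Surjective ε ∧
    LinearMap.ker ε = LinearMap.range (d 0) ∧
    (∀ i, LinearMap.ker (d i) = LinearMap.range (d (i + 1))) ∧
    (∀ i, g < i → Subsingleton (G i : Type))

open Classical in
noncomputable def mlen (M : Type) [AddCommGroup M] [Module R M] : ℕ :=
  if h : ∃ s : CompositionSeries (Submodule R M), s.head = ⊥ ∧ s.last = ⊤ then
    h.choose.length
  else 0

/-- Hochster's theta invariant `θ(M,N)` computed using `Tor_{2n}` and `Tor_{2n-1}`. -/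
noncomputable def theta (M N : Type) [AddCommGroup M] [Module R M]
    [AddCommGroup N] [Module R N] (n : ℕ) : ℤ :=
  (mlen R (TorM R (2 * n) M N) : ℤ) - (mlen R (TorM R (2 * n - 1) M N) : ℤ)

/-- `C` has rank `r`: localization at every associated prime of `R` is free of rank `r`. -/
def HasRankN (C : Type) [AddCommGroup C] [Module R C] (r : ℕ) : Prop :=
  ∀ (p : Ideal R) (_ : p.IsPrime), p ∈ associatedPrimes R R →
    Nonempty ((LocalizedModule p.primeCompl C) ≃ₗ[Localization.AtPrime p]
      (Fin r → Localization.AtPrime p))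

end


open CategoryTheory CategoryTheory.Limits CategoryTheory.ProjectiveResolution


noncomputable section

variable {R : Type} [CommRing R]
variable (B C : Type) [AddCommGroup B] [Module R B] [AddCommGroup C] [Module R C]
  [Module.Projective R B] [Module.Projective R C]
  (u : B →ₗ[R] C)

namespace TorScratch

instance : Projective (ModuleCat.of R B) := (IsProjective.iff_projective B).mp ‹_›
instance : Projective (ModuleCat.of R C) := (IsProjective.iff_projective C).mp ‹_›

/-- the resolution complex -/
def resComplex : ChainComplex (ModuleCat.{0} R) ℕ :=
  ChainComplex.mk' (ModuleCat.of R C) (ModuleCat.of R B) (ModuleCat.ofHom u)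
    (fun f => ⟨_, Projective.d f, by erw [Category.assoc, kernel.condition, comp_zero]⟩)

lemma resComplex_d_1_0 : (resComplex B C u).d 1 0 = ModuleCat.ofHom u := by
  simp [resComplex]

lemma resComplex_exactAt_succ (n : ℕ) :
    (resComplex B C u).ExactAt (n + 1) := by
  rw [HomologicalComplex.exactAt_iff' _ (n + 1 + 1) (n + 1) n (by simp) (by simp)]
  dsimp [resComplex, HomologicalComplex.sc', HomologicalComplex.shortComplexFunctor',
      ChainComplex.mk', ChainComplex.mk]
  match n with
  | 0 => apply exact_d_f
  | n + 1 =>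
    dsimp [ChainComplex.of, ChainComplex.of.d]
    simp only [dif_pos, eqToHom_refl, Category.id_comp]
    apply exact_d_f

instance (n : ℕ) : Projective ((resComplex B C u).X n) := by
  obtain (_ | _ | _ | n) := n
  · dsimp [resComplex]; infer_instance
  · dsimp [resComplex]; infer_instance
  · apply Projective.projective_over
  · apply Projective.projective_over

end TorScratch

namespace TorScratch
set_option linter.unusedSectionVars false

lemma res_exact0 :
    (ShortComplex.mk (ModuleCat.ofHom u)
      (ModuleCat.ofHom (LinearMap.range u).mkQ) (by
        ext x
        show (LinearMap.range u).mkQ (u x) = 0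
        simpa using (Submodule.Quotient.mk_eq_zero _).mpr (LinearMap.mem_range_self u x))).Exact := by
  rw [ShortComplex.moduleCat_exact_iff]
  intro x hx
  exact (Submodule.Quotient.mk_eq_zero _).mp hx

def resolution : ProjectiveResolution (ModuleCat.of R (C ⧸ LinearMap.range u)) where
  complex := resComplex B C u
  π := (ChainComplex.toSingle₀Equiv _ _).symm ⟨ModuleCat.ofHom (LinearMap.range u).mkQ, by
        rw [resComplex_d_1_0]
        ext x
        show (LinearMap.range u).mkQ (u x) = 0
        simpa using (Submodule.Quotient.mk_eq_zero _).mpr (LinearMap.mem_range_self u x)⟩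
  quasiIso := ⟨fun n => by
    cases n
    · rw [ChainComplex.quasiIsoAt₀_iff, ShortComplex.quasiIso_iff_of_zeros']
      · refine (ShortComplex.exact_and_epi_g_iff_of_iso ?_).2
          ⟨res_exact0 B C u, by
            dsimp
            rw [ModuleCat.epi_iff_surjective]
            exact Submodule.mkQ_surjective _⟩
        refine ShortComplex.isoMk (Iso.refl _) (Iso.refl _) (Iso.refl _) ?_ ?_
        · dsimp
          rfl
        · dsimp
          rfl
      all_goals rfl
    · rw [quasiIsoAt_iff_exactAt']
      · apply resComplex_exactAt_succ
      · apply ChainComplex.exactAt_succ_single_obj⟩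

end TorScratch

namespace TorScratch
set_option linter.unusedSectionVars false
open MonoidalCategory

variable (M : Type) [AddCommGroup M] [Module R M]

lemma key (hTor : Subsingleton (((Tor (ModuleCat R) 1).obj (ModuleCat.of R M)).obj
      (ModuleCat.of R (C ⧸ LinearMap.range u))))
    (t : TensorProduct R M B) (ht : LinearMap.lTensor M u t = 0) :
    t ∈ LinearMap.range (LinearMap.lTensor M (LinearMap.ker u).subtype) := by
  set F := (tensoringLeft (ModuleCat R)).obj (ModuleCat.of R M) with hF
  set P := resolution B C u with hP
  set T := (F.mapHomologicalComplex _).obj P.complex with hT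
  have e := P.isoLeftDerivedObj F 1
  have h1 : IsZero ((F.leftDerived 1).obj (ModuleCat.of R (C ⧸ LinearMap.range u))) :=
    @ModuleCat.isZero_of_subsingleton _ _ _ hTor
  have h2 : IsZero ((HomologicalComplex.homologyFunctor _ _ 1).obj T) := h1.of_iso e.symm
  have hex : T.ExactAt 1 := by
    rw [HomologicalComplex.exactAt_iff_isZero_homology]
    exact h2
  rw [HomologicalComplex.exactAt_iff' _ 2 1 0 (by simp) (by simp)] at hex
  rw [ShortComplex.moduleCat_exact_iff] at hex
  have hd10 : P.complex.d 1 0 = ModuleCat.ofHom u := resComplex_d_1_0 B C u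
  have hg' : (T.sc' 2 1 0).g = ModuleCat.ofHom (LinearMap.lTensor M u) := by
    show F.map (P.complex.d 1 0) = _
    rw [hd10]
    rfl
  obtain ⟨s, hs⟩ := hex t (by rw [hg'] at *; exact ht)
  have hδ : ∀ p : P.complex.X 2, u (P.complex.d 2 1 p) = 0 := by
    intro p
    have := P.complex.d_comp_d 2 1 0
    rw [hd10] at this
    exact congrArg (fun (f : P.complex.X 2 ⟶ ModuleCat.of R C) => f p) this
  have hs' : (T.sc' 2 1 0).f = F.map (P.complex.d 2 1) := rfl
  rw [hs'] at hs
  rw [← hs]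
  clear hs ht hex
  induction s using TensorProduct.induction_on with
  | zero => simp only [map_zero]; exact Submodule.zero_mem _
  | tmul m p =>
      refine ⟨m ⊗ₜ ⟨P.complex.d 2 1 p, hδ p⟩, ?_⟩
      rfl
  | add x y hx hy =>
      have := Submodule.add_mem _ hx hy
      exact (congrArg (· ∈ LinearMap.range (LinearMap.lTensor M (LinearMap.ker u).subtype))
        (map_add (ConcreteCategory.hom (F.map (P.complex.d 2 1))) x y)).mpr this

end TorScratch


theorem free_of_tor_one_transpose_vanishes
    (R : Type) [CommRing R] [IsNoetherianRing R] [IsLocalRing R]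
    (M : Type) [AddCommGroup M] [Module R M] [Module.Finite R M]
    (n₀ n₁ : ℕ)
    (d : (Fin n₁ → R) →ₗ[R] (Fin n₀ → R)) (g : (Fin n₀ → R) →ₗ[R] M)
    (hg : Function.Surjective g) (hkg : LinearMap.ker g = LinearMap.range d)
    (hmin0 : LinearMap.ker g ≤ (maximalIdeal R) • (⊤ : Submodule R (Fin n₀ → R)))
    (hmin1 : LinearMap.ker d ≤ (maximalIdeal R) • (⊤ : Submodule R (Fin n₁ → R)))
    (hTor : Subsingleton (TorM R 1 M
      (Module.Dual R (Fin n₁ → R) ⧸ LinearMap.range d.dualMap))) :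
    Module.Free R M := by
  classical
  set u := d.dualMap with hu
  let eB : TensorProduct R M (Module.Dual R (Fin n₀ → R)) ≃ₗ[R] ((Fin n₀ → R) →ₗ[R] M) :=
    (TensorProduct.comm R M _) ≪≫ₗ dualTensorHomEquivOfBasis (Pi.basisFun R (Fin n₀))
  let eC : TensorProduct R M (Module.Dual R (Fin n₁ → R)) ≃ₗ[R] ((Fin n₁ → R) →ₗ[R] M) :=
    (TensorProduct.comm R M _) ≪≫ₗ dualTensorHomEquivOfBasis (Pi.basisFun R (Fin n₁))
  have nat : ∀ z, eC (LinearMap.lTensor M u z) = (eB z) ∘ₗ d := by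
    intro z
    induction z using TensorProduct.induction_on with
    | zero => simp
    | tmul m φ =>
        ext y
        simp [eB, eC, hu, dualTensorHomEquivOfBasis_apply]
    | add x y hx hy =>
        rw [map_add, map_add, map_add, LinearMap.add_comp, hx, hy]
  have hgd : g ∘ₗ d = 0 := LinearMap.ext fun x => show g (d x) = 0 by
    have : d x ∈ LinearMap.ker g := by rw [hkg]; exact LinearMap.mem_range_self d x
    exact this
  set t := eB.symm g with htdef
  have ht0 : LinearMap.lTensor M u t = 0 := by
    apply eC.injective
    rw [nat, map_zero]
    rw [htdef, eB.apply_symm_apply, hgd]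
  obtain ⟨s, hs⟩ := TorScratch.key _ _ u M hTor t ht0
  obtain ⟨S, hS⟩ := TensorProduct.exists_finset s
  -- lift functionals through g
  let e0 := g.quotKerEquivOfSurjective hg
  have he0 : ∀ x, e0.symm (g x) = Submodule.Quotient.mk x := by
    intro x
    apply e0.injective
    rw [e0.apply_symm_apply]
    rfl
  let ψ : LinearMap.ker u → (M →ₗ[R] R) := fun p =>
    ((LinearMap.ker g).liftQ (p : Module.Dual R (Fin n₀ → R)) (by
      rw [hkg]
      rintro _ ⟨x, rfl⟩
      have hp : (p : Module.Dual R (Fin n₀ → R)).comp d = 0 := p.2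
      exact congrArg (fun f => f x) hp)) ∘ₗ (e0.symm : M →ₗ[R] _)
  have hψ : ∀ (p : LinearMap.ker u) (x : Fin n₀ → R),
      ψ p (g x) = (p : Module.Dual R (Fin n₀ → R)) x := by
    intro p x
    simp only [ψ, LinearMap.comp_apply, LinearEquiv.coe_coe]
    rw [he0 x, Submodule.liftQ_apply]
  -- dual basis identity
  have hdb : ∀ m : M, ∑ p ∈ S, ψ p.2 m • p.1 = m := by
    intro m
    obtain ⟨x, rfl⟩ := hg m
    have hgt : g = eB ((LinearMap.lTensor M (LinearMap.ker u).subtype) s) := by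
      rw [hs, htdef, eB.apply_symm_apply]
    calc ∑ p ∈ S, ψ p.2 (g x) • p.1
        = ∑ p ∈ S, (p.2 : Module.Dual R (Fin n₀ → R)) x • p.1 := by
          refine Finset.sum_congr rfl fun p _ => ?_
          rw [hψ]
      _ = g x := by
          conv_rhs => rw [hgt, hS]
          rw [map_sum, map_sum, LinearMap.sum_apply]
          refine Finset.sum_congr rfl fun p _ => ?_
          rw [LinearMap.lTensor_tmul]
          simp [eB, dualTensorHomEquivOfBasis_apply]
  have hproj : Module.Projective R M := by
    refine ⟨⟨∑ p ∈ S, (Finsupp.lsingle p.1) ∘ₗ (ψ p.2), fun m => ?_⟩⟩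
    simp only [LinearMap.sum_apply, LinearMap.comp_apply, Finsupp.lsingle_apply, map_sum,
      Finsupp.linearCombination_single, id_eq]
    exact hdb m
  have hfp : Module.FinitePresentation R M := Module.finitePresentation_of_projective R M
  exact Module.free_of_flat_of_isLocalRing
end
end

section
/- Let R be a one-dimensional commutative Noetherian local ring and N a finitely generated R-module that has rank. Then [N] = 0 in the reduced Grothendieck group with rational coefficients Ḡ(R)_ℚ. In particular, if R is a one-dimensional local domain, [N] = 0 in Ḡ(R)_ℚ for every finitely generated R-module N. -/
open CategoryTheory IsLocalRing

noncomputable section AuxG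

namespace AuxCG

variable (R : Type) [CommRing R]

/-- class of an index in the reduced rational Grothendieck group -/
def cls (x : FGIdx R) : GbarQ R :=
  Submodule.Quotient.mk (p := Submodule.span ℚ (gRelQbar R)) (Finsupp.single x 1)

lemma cls_rel {x y z : FGIdx R} (f : idxMod R x →ₗ[R] idxMod R y)
    (g : idxMod R y →ₗ[R] idxMod R z) (hf : Function.Injective f)
    (hg : Function.Surjective g) (hfg : LinearMap.range f = LinearMap.ker g) :
    cls R y = cls R x + cls R z := by
  have hmem : (Finsupp.single y 1 - Finsupp.single x 1 - Finsupp.single z 1 : FGIdx R →₀ ℚ)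
      ∈ Submodule.span ℚ (gRelQbar R) :=
    Submodule.subset_span (Or.inl ⟨x, y, z, f, g, hf, hg, hfg, rfl⟩)
  have h0 : (Submodule.Quotient.mk (p := Submodule.span ℚ (gRelQbar R))
      (Finsupp.single y 1 - Finsupp.single x 1 - Finsupp.single z 1) : GbarQ R) = 0 :=
    (Submodule.Quotient.mk_eq_zero _).2 hmem
  rw [Submodule.Quotient.mk_sub, Submodule.Quotient.mk_sub, sub_sub, sub_eq_zero] at h0
  simpa [cls] using h0

/-- a fixed presentation of the zero module -/
def zx : FGIdx R := ⟨0, ⊤⟩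

instance : Subsingleton (idxMod R (zx R)) :=
  Submodule.Quotient.subsingleton_iff.2 rfl

lemma submodule_eq_of_subsingleton {M : Type} [AddCommGroup M] [Module R M]
    [Subsingleton M] (W W' : Submodule R M) : W = W' := by
  ext a; rw [Subsingleton.elim a 0]; simp

lemma cls_zx : cls R (zx R) = 0 := by
  have h2 : cls R (zx R) = cls R (zx R) + cls R (zx R) :=
    cls_rel R (x := zx R) (y := zx R) (z := zx R) 0 0
      (fun a b _ => Subsingleton.elim a b) (fun a => ⟨0, Subsingleton.elim _ _⟩)
      (submodule_eq_of_subsingleton R _ _)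
  exact (left_eq_add.mp h2)

lemma cls_congr {x y : FGIdx R} (e : idxMod R x ≃ₗ[R] idxMod R y) :
    cls R x = cls R y := by
  have h := cls_rel R (x := x) (y := y) (z := zx R) e.toLinearMap 0
    e.injective (fun a => ⟨0, Subsingleton.elim _ _⟩)
    (by
      have h1 : LinearMap.range e.toLinearMap = ⊤ := LinearMap.range_eq_top.2 e.surjective
      rw [h1]
      exact (Submodule.eq_top_iff'.2 fun a => by simp).symm)
  rw [h, cls_zx, add_zero]

variable {R}

lemma exists_idx (R : Type) [CommRing R] (M : Type) [AddCommGroup M] [Module R M]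
    [Module.Finite R M] : ∃ x : FGIdx R, Nonempty (idxMod R x ≃ₗ[R] M) := by
  obtain ⟨n, f, hf⟩ := Module.Finite.exists_fin' R M
  exact ⟨⟨n, LinearMap.ker f⟩, ⟨f.quotKerEquivOfSurjective hf⟩⟩

/-- the class in `Ḡ(R)_ℚ` of an arbitrary module (0 if not finitely presented-able) -/
def clM (M : Type) [AddCommGroup M] [Module R M] : GbarQ R :=
  open Classical in
  if h : ∃ x : FGIdx R, Nonempty (idxMod R x ≃ₗ[R] M) then cls R h.choose else 0

lemma clM_eq_cls {M : Type} [AddCommGroup M] [Module R M] (x : FGIdx R)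
    (e : idxMod R x ≃ₗ[R] M) : clM (R := R) M = cls R x := by
  have h : ∃ x : FGIdx R, Nonempty (idxMod R x ≃ₗ[R] M) := ⟨x, ⟨e⟩⟩
  rw [clM, dif_pos h]
  exact cls_congr R (h.choose_spec.some.trans e.symm)

lemma clM_congr {M M' : Type} [AddCommGroup M] [Module R M] [AddCommGroup M']
    [Module R M'] [Module.Finite R M] (e : M ≃ₗ[R] M') :
    clM (R := R) M = clM (R := R) M' := by
  obtain ⟨x, ⟨ex⟩⟩ := exists_idx R M
  rw [clM_eq_cls x ex, clM_eq_cls x (ex.trans e)]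

lemma clM_subsingleton {M : Type} [AddCommGroup M] [Module R M] [Subsingleton M] :
    clM (R := R) M = 0 := by
  have e : idxMod R (zx R) ≃ₗ[R] M :=
    { toFun := fun _ => 0
      map_add' := fun _ _ => by simp
      map_smul' := fun _ _ => by simp
      invFun := fun _ => 0
      left_inv := fun a => Subsingleton.elim _ _
      right_inv := fun a => Subsingleton.elim _ _ }
  rw [clM_eq_cls (zx R) e, cls_zx]

lemma clM_additive {A B C : Type} [AddCommGroup A] [Module R A] [Module.Finite R A]
    [AddCommGroup B] [Module R B] [Module.Finite R B]
    [AddCommGroup C] [Module R C] [Module.Finite R C]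
    (f : A →ₗ[R] B) (g : B →ₗ[R] C) (hf : Function.Injective f)
    (hg : Function.Surjective g) (hfg : LinearMap.range f = LinearMap.ker g) :
    clM (R := R) B = clM (R := R) A + clM (R := R) C := by
  obtain ⟨x, ⟨ex⟩⟩ := exists_idx R A
  obtain ⟨y, ⟨ey⟩⟩ := exists_idx R B
  obtain ⟨z, ⟨ez⟩⟩ := exists_idx R C
  rw [clM_eq_cls x ex, clM_eq_cls y ey, clM_eq_cls z ez]
  refine cls_rel R (ey.symm.toLinearMap ∘ₗ f ∘ₗ ex.toLinearMap)
    (ez.symm.toLinearMap ∘ₗ g ∘ₗ ey.toLinearMap) ?_ ?_ ?_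
  · exact ey.symm.injective.comp (hf.comp ex.injective)
  · exact ez.symm.surjective.comp (hg.comp ey.surjective)
  · ext b
    simp only [LinearMap.mem_range, LinearMap.mem_ker, LinearMap.coe_comp,
      Function.comp_apply, LinearEquiv.coe_coe]
    constructor
    · rintro ⟨a, rfl⟩
      have : f (ex a) ∈ LinearMap.ker g := hfg ▸ LinearMap.mem_range_self f (ex a)
      simp only [LinearMap.mem_ker] at this
      simp [this]
    · intro hb
      have hb' : g (ey b) = 0 := by
        have h3 := congrArg ez hb
        simpa using h3
      have hb2 : ey b ∈ LinearMap.range f := hfg ▸ (LinearMap.mem_ker.2 hb')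
      obtain ⟨a, ha⟩ := hb2
      exact ⟨ex.symm a, by simp [ha]⟩

lemma clM_ring : clM (R := R) R = 0 := by
  obtain ⟨x, ⟨ex⟩⟩ := exists_idx R R
  rw [clM_eq_cls x ex]
  have hmem : (Finsupp.single x 1 : FGIdx R →₀ ℚ) ∈ Submodule.span ℚ (gRelQbar R) :=
    Submodule.subset_span (Or.inr ⟨x, ⟨ex⟩, rfl⟩)
  exact (Submodule.Quotient.mk_eq_zero _).2 hmem

end AuxCG

end AuxG
noncomputable section AuxG2

namespace AuxCG

open Submodule IsLocalRing

variable {R : Type} [CommRing R]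

/-- the linear map `M → (Fin (n+1) → M)` sending `m` to `(m, 0, …, 0)` -/
def consMap (R M : Type) [CommRing R] [AddCommGroup M] [Module R M] (n : ℕ) :
    M →ₗ[R] (Fin (n + 1) → M) where
  toFun m := Fin.cons m 0
  map_add' m m' := by
    funext i
    refine Fin.cases ?_ (fun j => ?_) i <;> simp
  map_smul' a m := by
    funext i
    refine Fin.cases ?_ (fun j => ?_) i <;> simp

lemma clM_pi (M : Type) [AddCommGroup M] [Module R M] [Module.Finite R M] (r : ℕ) :
    clM (R := R) (Fin r → M) = r • clM (R := R) M := by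
  induction r with
  | zero => rw [clM_subsingleton, zero_smul]
  | succ n ih =>
    have hadd := clM_additive (R := R) (consMap R M n) (LinearMap.funLeft R M Fin.succ)
      ?_ ?_ ?_
    · rw [hadd, ih, succ_nsmul, add_comm]
    · intro a b hab
      have := congrFun hab 0
      simpa [consMap] using this
    · intro w
      refine ⟨Fin.cons 0 w, ?_⟩
      funext i
      simp [LinearMap.funLeft]
    · ext v
      simp only [LinearMap.mem_range, LinearMap.mem_ker]
      constructor
      · rintro ⟨m, rfl⟩
        funext i
        simp [LinearMap.funLeft, consMap]
      · intro hv
        refine ⟨v 0, ?_⟩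
        funext i
        refine Fin.cases ?_ (fun j => ?_) i
        · simp [consMap]
        · have := congrFun hv j
          simp only [LinearMap.funLeft_apply] at this
          simp [consMap, this]

lemma clM_pi_ring (r : ℕ) : clM (R := R) (Fin r → R) = 0 := by
  rw [clM_pi, clM_ring, smul_zero]

variable [IsLocalRing R]

lemma clM_torsion_max (C : Type) [AddCommGroup C] [Module R C] [Module.Finite R C]
    (h : ∀ a ∈ maximalIdeal R, ∀ c : C, a • c = 0) :
    ∃ d : ℕ, clM (R := R) C = d • clM (R := R) (resF R) ∧ (Nontrivial C → d ≠ 0) := by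
  have htor : Module.IsTorsionBySet R C (maximalIdeal R : Set R) := by
    intro c a
    exact h a.1 a.2 c
  letI : Module (resF R) C := htor.module
  haveI : IsScalarTower R (resF R) C := htor.isScalarTower
  haveI : Module.Finite (resF R) C := Module.Finite.of_restrictScalars_finite R (resF R) C
  letI : Field (resF R) := Ideal.Quotient.field (maximalIdeal R)
  set d := Module.finrank (resF R) C with hd
  let b : Module.Basis (Fin d) (resF R) C := Module.finBasis (resF R) C
  let e : C ≃ₗ[resF R] (Fin d → resF R) := b.equivFun
  let eR : C ≃ₗ[R] (Fin d → resF R) := e.restrictScalars R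
  refine ⟨d, ?_, ?_⟩
  · rw [clM_congr eR, clM_pi]
  · intro hnt
    exact (Module.finrank_pos (R := resF R) (M := C)).ne'

lemma clM_torsion_pow [IsNoetherianRing R] (n : ℕ) (C : Type) [AddCommGroup C] [Module R C]
    [Module.Finite R C] (h : ∀ a ∈ (maximalIdeal R) ^ n, ∀ c : C, a • c = 0) :
    ∃ d : ℕ, clM (R := R) C = d • clM (R := R) (resF R) ∧ (Nontrivial C → d ≠ 0) := by
  induction n generalizing C with
  | zero =>
    have hsub : Subsingleton C := by
      constructor
      intro a b
      have h1 : (1 : R) • a = 0 := h 1 (by simp) a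
      have h2 : (1 : R) • b = 0 := h 1 (by simp) b
      rw [one_smul] at h1 h2
      rw [h1, h2]
    refine ⟨0, by rw [clM_subsingleton, zero_smul], fun hnt => absurd hnt ?_⟩
    rw [← not_nontrivial_iff_subsingleton] at hsub
    exact hsub
  | succ n ih =>
    set W : Submodule R C := maximalIdeal R • ⊤ with hW
    haveI : IsNoetherian R C := inferInstance
    haveI : Module.Finite R W := Module.Finite.iff_fg.2 (IsNoetherian.noetherian W)
    have hWtor : ∀ a ∈ (maximalIdeal R) ^ n, ∀ w : W, a • w = 0 := by
      intro a ha w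
      have : a • (w : C) = 0 := by
        refine Submodule.smul_induction_on w.2 ?_ ?_
        · intro b hb c _
          rw [smul_smul]
          exact h (a * b) (by rw [pow_succ]; exact Ideal.mul_mem_mul ha hb) c
        · intro u v hu hv
          rw [smul_add, hu, hv, add_zero]
      exact Subtype.ext (by simpa using this)
    obtain ⟨d₁, hd₁, _⟩ := ih W hWtor
    have hQtor : ∀ a ∈ maximalIdeal R, ∀ q : C ⧸ W, a • q = 0 := by
      intro a ha q
      obtain ⟨c, rfl⟩ := Submodule.Quotient.mk_surjective W q
      rw [← Submodule.Quotient.mk_smul, Submodule.Quotient.mk_eq_zero]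
      exact Submodule.smul_mem_smul ha trivial
    obtain ⟨d₂, hd₂, hd₂nt⟩ := clM_torsion_max (C ⧸ W) hQtor
    have hadd := clM_additive (R := R) W.subtype W.mkQ W.injective_subtype
      (Submodule.Quotient.mk_surjective W) (by rw [Submodule.range_subtype, Submodule.ker_mkQ])
    refine ⟨d₁ + d₂, ?_, ?_⟩
    · rw [hadd, hd₁, hd₂, add_smul]
    · intro hnt hzero
      have hWne : W ≠ ⊤ := by
        intro htop
        have : (⊤ : Submodule R C) = ⊥ := by
          refine Submodule.eq_bot_of_le_smul_of_le_jacobson_bot (maximalIdeal R) ⊤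
            (IsNoetherian.noetherian ⊤) (by rw [← hW, htop]) ?_
          rw [jacobson_eq_maximalIdeal ⊥ bot_ne_top]
        have : Subsingleton C := by
          constructor
          intro a b
          have ha : a ∈ (⊥ : Submodule R C) := this ▸ Submodule.mem_top
          have hb : b ∈ (⊥ : Submodule R C) := this ▸ Submodule.mem_top
          rw [Submodule.mem_bot] at ha hb
          rw [ha, hb]
        exact (not_nontrivial_iff_subsingleton.2 this) hnt
      have : Nontrivial (C ⧸ W) := Submodule.Quotient.nontrivial_iff.2 hWne
      exact hd₂nt this (by omega)

end AuxCG

end AuxG2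
noncomputable section AuxG3

namespace AuxCG

open Submodule IsLocalRing

variable {R : Type} [CommRing R]

lemma prime_minimal [IsLocalRing R] (hdim : ringKrullDim R = 1) {p : Ideal R}
    (hp : p.IsPrime) (hpm : p ≠ maximalIdeal R) : p ∈ minimalPrimes R := by
  refine ⟨⟨hp, bot_le⟩, ?_⟩
  rintro q ⟨hq, -⟩ hqp
  by_contra hpq
  have h1 : q < p := lt_of_le_of_ne hqp (by rintro rfl; exact hpq le_rfl)
  have h2 : p < maximalIdeal R := lt_of_le_of_ne (le_maximalIdeal hp.ne_top) hpm
  haveI : (maximalIdeal R).IsPrime := ((maximalIdeal.isMaximal R)).isPrime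
  let c : LTSeries (PrimeSpectrum R) :=
    ⟨2, ![⟨q, hq⟩, ⟨p, hp⟩, ⟨maximalIdeal R, inferInstance⟩], by
      intro i
      fin_cases i
      · exact h1
      · exact h2⟩
  have hle := Order.LTSeries.length_le_krullDim c
  rw [show Order.krullDim (PrimeSpectrum R) = ringKrullDim R from rfl, hdim] at hle
  have hlen : c.length = 2 := rfl
  rw [hlen] at hle
  norm_num at hle

lemma minimal_isAssociated [IsNoetherianRing R] {p : Ideal R} (hp : p ∈ minimalPrimes R) :
    p ∈ associatedPrimes R R := by
  classical
  have hprime : p.IsPrime := hp.1.1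
  let I : Ideal R :=
    { carrier := {x | ∃ s ∈ p.primeCompl, s * x = 0}
      add_mem' := by
        rintro x y ⟨s, hs, hsx⟩ ⟨t, ht, hty⟩
        refine ⟨s * t, mul_mem hs ht, ?_⟩
        have : s * t * (x + y) = t * (s * x) + s * (t * y) := by ring
        rw [this, hsx, hty, mul_zero, mul_zero, add_zero]
      zero_mem' := ⟨1, p.primeCompl.one_mem, by ring⟩
      smul_mem' := by
        rintro c x ⟨s, hs, hsx⟩
        refine ⟨s, hs, ?_⟩
        have : s * (c • x) = c * (s * x) := by simp [smul_eq_mul]; ring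
        rw [this, hsx, mul_zero] }
  have h1I : (1 : R) ∉ I := by
    rintro ⟨s, hs, hs1⟩
    rw [mul_one] at hs1
    exact hs (hs1 ▸ p.zero_mem)
  have hy0 : (Submodule.Quotient.mk (p := I) 1 : R ⧸ I) ≠ 0 := by
    rw [Ne, Submodule.Quotient.mk_eq_zero]
    exact h1I
  obtain ⟨q, ⟨y, hy, hqy⟩, hmax⟩ :=
    set_has_maximal_iff_noetherian.mpr (inferInstance : IsNoetherian R R)
      {J : Ideal R | ∃ y : R ⧸ I, y ≠ 0 ∧ J = (Submodule.span R {y}).annihilator}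
      ⟨_, _, hy0, rfl⟩
  obtain ⟨x, rfl⟩ := Submodule.Quotient.mk_surjective I y
  have hxI : x ∉ I := by
    rw [← Submodule.Quotient.mk_eq_zero (p := I)] at *
    exact hy
  have hmem_q : ∀ a : R, a ∈ q ↔ (Submodule.Quotient.mk (p := I) (a * x) : R ⧸ I) = 0 := by
    intro a
    rw [hqy, Submodule.mem_annihilator_span_singleton]
    constructor
    · intro h
      rw [← Submodule.Quotient.mk_smul] at h
      simpa [smul_eq_mul] using h
    · intro h
      rw [← Submodule.Quotient.mk_smul]
      simpa [smul_eq_mul] using h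
  have hqp : q ≤ p := by
    intro a ha
    rw [hmem_q, Submodule.Quotient.mk_eq_zero] at ha
    obtain ⟨s, hs, hsax⟩ := ha
    by_contra hap
    refine hxI ⟨s * a, mul_mem hs hap, ?_⟩
    rw [mul_assoc]
    exact hsax
  have hqprime : Ideal.IsPrime q := by
    constructor
    · intro htop
      have h1 : (1 : R) ∈ q := htop ▸ Submodule.mem_top
      rw [hmem_q, one_mul, Submodule.Quotient.mk_eq_zero] at h1
      exact hxI h1
    · intro a b hab
      rw [or_iff_not_imp_right]
      intro hb
      have hby : (b : R) • (Submodule.Quotient.mk (p := I) x : R ⧸ I) ≠ 0 := by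
        intro h
        apply hb
        rw [hmem_q, show b * x = b • x from rfl, Submodule.Quotient.mk_smul]
        exact h
      have hqle : q ≤ (Submodule.span R {(b : R) • (Submodule.Quotient.mk (p := I) x : R ⧸ I)}).annihilator := by
        intro c hc
        rw [Submodule.mem_annihilator_span_singleton]
        rw [hqy, Submodule.mem_annihilator_span_singleton] at hc
        rw [smul_comm, hc, smul_zero]
      have heq : (Submodule.span R {(b : R) • (Submodule.Quotient.mk (p := I) x : R ⧸ I)}).annihilator = q := by
        by_contra hne
        exact hmax _ ⟨_, hby, rfl⟩ (lt_of_le_of_ne hqle (Ne.symm hne))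
      rw [← heq, Submodule.mem_annihilator_span_singleton]
      have hss : a • ((b : R) • (Submodule.Quotient.mk (p := I) x : R ⧸ I)) =
          (a * b) • (Submodule.Quotient.mk (p := I) x : R ⧸ I) := smul_smul a b _
      rw [hss]
      rw [hqy, Submodule.mem_annihilator_span_singleton] at hab
      exact hab
  have hqeq : q = p := le_antisymm hqp (hp.2 ⟨hqprime, bot_le⟩ hqp)
  -- now clear denominators
  obtain ⟨fs, hfs⟩ := IsNoetherian.noetherian p
  have hchoice : ∀ a : fs, ∃ s, s ∈ p.primeCompl ∧ s * ((a : R) * x) = 0 := by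
    intro a
    have hap : (a : R) ∈ p := hfs ▸ Submodule.subset_span a.2
    have : (a : R) ∈ q := hqeq ▸ hap
    rw [hmem_q, Submodule.Quotient.mk_eq_zero] at this
    obtain ⟨s, hs, hsax⟩ := this
    exact ⟨s, hs, hsax⟩
  choose t ht1 ht2 using hchoice
  set u : R := ∏ a ∈ fs.attach, t a with hu
  have hup : u ∈ p.primeCompl := prod_mem fun a _ => ht1 a
  refine (isAssociatedPrime_iff).2 ⟨hprime, u * x, le_antisymm ?_ ?_⟩
  · rw [← hfs, Submodule.span_le]
    intro a ha
    rw [SetLike.mem_coe, Submodule.mem_colon_singleton, Submodule.mem_bot, smul_eq_mul]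
    have hmem : (⟨a, ha⟩ : fs) ∈ fs.attach := Finset.mem_attach _ _
    have hdecomp : u = t ⟨a, ha⟩ * ∏ b ∈ fs.attach.erase ⟨a, ha⟩, t b :=
      (Finset.mul_prod_erase fs.attach t hmem).symm
    have : a * (u * x) = (∏ b ∈ fs.attach.erase ⟨a, ha⟩, t b) * (t ⟨a, ha⟩ * (a * x)) := by
      rw [hdecomp]; ring
    rw [this, ht2 ⟨a, ha⟩, mul_zero]
  · intro b hb
    rw [Submodule.mem_colon_singleton, Submodule.mem_bot, smul_eq_mul] at hb
    have : b * u ∈ q := by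
      rw [hmem_q, Submodule.Quotient.mk_eq_zero]
      refine ⟨1, p.primeCompl.one_mem, ?_⟩
      rw [one_mul]
      linear_combination hb
    rw [hqeq] at this
    rcases hprime.mem_or_mem this with hbp | hup'
    · exact hbp
    · exact absurd hup' hup

end AuxCG

end AuxG3
noncomputable section AuxG4

namespace AuxCG

open Submodule IsLocalRing

variable {R : Type} [CommRing R] [IsLocalRing R] [IsNoetherianRing R]

lemma ass_subset_minimal (hdim : ringKrullDim R = 1)
    (hm : maximalIdeal R ∉ associatedPrimes R R) :
    associatedPrimes R R ⊆ minimalPrimes R := by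
  intro p hp
  exact prime_minimal hdim hp.isPrime (fun h => hm (h ▸ hp))

lemma ass_finite (hdim : ringKrullDim R = 1)
    (hm : maximalIdeal R ∉ associatedPrimes R R) : (associatedPrimes R R).Finite :=
  (minimalPrimes.finite_of_isNoetherianRing R).subset (ass_subset_minimal hdim hm)

/-- there is an element of the maximal ideal outside all associated primes -/
lemma exists_avoid (hdim : ringKrullDim R = 1)
    (hm : maximalIdeal R ∉ associatedPrimes R R) :
    ∃ x ∈ maximalIdeal R, ∀ p ∈ associatedPrimes R R, x ∉ p := by
  classical
  set s : Finset (Ideal R) := (ass_finite hdim hm).toFinset with hs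
  have hnot : ¬ ((maximalIdeal R : Set R) ⊆ ⋃ p ∈ (s : Set (Ideal R)), (p : Set R)) := by
    rw [Ideal.subset_union_prime (⊤ : Ideal R) (⊤ : Ideal R)
      (fun i hi _ _ => (((ass_finite hdim hm).mem_toFinset.1 hi)).isPrime)]
    rintro ⟨i, hi, hle⟩
    have hiass : i ∈ associatedPrimes R R := (ass_finite hdim hm).mem_toFinset.1 hi
    have him : i ≤ maximalIdeal R := le_maximalIdeal hiass.isPrime.ne_top
    exact hm ((le_antisymm him hle).symm ▸ hiass)
  rw [Set.not_subset] at hnot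
  obtain ⟨x, hx1, hx2⟩ := hnot
  refine ⟨x, hx1, ?_⟩
  intro p hp hxp
  exact hx2 (Set.mem_biUnion ((ass_finite hdim hm).mem_toFinset.2 hp) hxp)

lemma clM_resF_zero (hdim : ringKrullDim R = 1)
    (hm : maximalIdeal R ∉ associatedPrimes R R) : clM (R := R) (resF R) = 0 := by
  obtain ⟨x, hxm, hxa⟩ := exists_avoid hdim hm
  -- every prime over (x) is the maximal ideal
  have hrad : maximalIdeal R ≤ (Ideal.span {x}).radical := by
    rw [Ideal.radical_eq_sInf]
    refine le_sInf ?_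
    rintro J ⟨hJx, hJp⟩
    have hJm : J = maximalIdeal R := by
      by_contra hne
      exact hxa J (minimal_isAssociated (prime_minimal hdim hJp hne))
        (hJx (Ideal.subset_span rfl))
    rw [hJm]
  obtain ⟨n, hn⟩ := Ideal.exists_pow_le_of_le_radical_of_fg hrad
    (IsNoetherian.noetherian (maximalIdeal R))
  -- x is a nonzerodivisor
  have hreg : ∀ y : R, x * y = 0 → y = 0 := by
    intro y hy
    by_contra hy0
    obtain ⟨P, hP, hle⟩ := exists_le_isAssociatedPrime_of_isNoetherianRing R y hy0
    refine hxa P hP (hle ?_)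
    rw [Submodule.mem_colon_singleton, Submodule.mem_bot, smul_eq_mul]
    exact hy
  -- the short exact sequence 0 → R → R → R/(x) → 0
  have hinj : Function.Injective (LinearMap.lsmul R R x) := by
    intro a b hab
    have : x * (a - b) = 0 := by
      simp only [LinearMap.lsmul_apply, smul_eq_mul] at hab
      rw [mul_sub, hab, sub_self]
    exact sub_eq_zero.mp (hreg _ this)
  have hexact : LinearMap.range (LinearMap.lsmul R R x) =
      LinearMap.ker ((Ideal.span {x}).mkQ) := by
    rw [Submodule.ker_mkQ]
    ext z
    simp only [LinearMap.mem_range, LinearMap.lsmul_apply, smul_eq_mul]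
    rw [Ideal.mem_span_singleton']
    constructor
    · rintro ⟨y, rfl⟩; exact ⟨y, mul_comm y x⟩
    · rintro ⟨y, rfl⟩; exact ⟨y, mul_comm x y⟩
  have hadd := clM_additive (R := R) (LinearMap.lsmul R R x) (Ideal.span {x}).mkQ
    hinj (Submodule.Quotient.mk_surjective _) hexact
  rw [clM_ring] at hadd
  have hC0 : clM (R := R) (R ⧸ Ideal.span {x}) = 0 := by
    rw [zero_add] at hadd
    exact hadd.symm
  have htor : ∀ a ∈ (maximalIdeal R) ^ n, ∀ c : R ⧸ Ideal.span {x}, a • c = 0 := by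
    intro a ha c
    obtain ⟨y, rfl⟩ := Submodule.Quotient.mk_surjective _ c
    rw [← Submodule.Quotient.mk_smul, Submodule.Quotient.mk_eq_zero]
    exact Ideal.mul_mem_right y _ (hn ha)
  obtain ⟨d, hdeq, hdnt⟩ := clM_torsion_pow n (R ⧸ Ideal.span {x}) htor
  have hnt : Nontrivial (R ⧸ Ideal.span {x}) := by
    refine Submodule.Quotient.nontrivial_iff.2
      (lt_of_le_of_lt (b := (maximalIdeal R : Submodule R R)) ?_ ?_).ne
    · exact (Ideal.span_le).2 (Set.singleton_subset_iff.2 hxm)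
    · exact lt_top_iff_ne_top.2 (Ideal.IsMaximal.ne_top (maximalIdeal.isMaximal R))
  have hd0 : d ≠ 0 := hdnt hnt
  rw [hC0] at hdeq
  -- 0 = d • clM resF, divide by d
  have hq : ((d : ℚ)) • clM (R := R) (resF R) = 0 := by
    rw [Nat.cast_smul_eq_nsmul]
    exact hdeq.symm
  have hne : (d : ℚ) ≠ 0 := Nat.cast_ne_zero.2 hd0
  have h2 := congrArg (fun v => ((d : ℚ))⁻¹ • v) hq
  simp only [smul_smul, inv_mul_cancel₀ hne, one_smul, smul_zero] at h2
  exact h2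

end AuxCG

end AuxG4
noncomputable section AuxG5

namespace AuxCG

open Submodule IsLocalRing

variable {R : Type} [CommRing R]

/-- Nakayama: a submodule whose sum with `m•⊤` is everything is everything. -/
lemma sup_smul_top_eq_top {A M : Type} [CommRing A] [IsLocalRing A] [AddCommGroup M]
    [Module A M] [Module.Finite A M] (W : Submodule A M)
    (h : W ⊔ maximalIdeal A • ⊤ = ⊤) : W = ⊤ := by
  rw [← Submodule.Quotient.subsingleton_iff]
  have hmtop : Submodule.map W.mkQ ⊤ = (⊤ : Submodule A (M ⧸ W)) := by
    rw [Submodule.map_top, Submodule.range_mkQ]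
  have hWbot : Submodule.map W.mkQ W = ⊥ := by
    rw [eq_bot_iff]
    rintro z ⟨w, hw, rfl⟩
    simpa [Submodule.mem_bot, Submodule.mkQ_apply] using (Submodule.Quotient.mk_eq_zero W).2 hw
  have hsm : (⊤ : Submodule A (M ⧸ W)) ≤ maximalIdeal A • ⊤ := by
    calc (⊤ : Submodule A (M ⧸ W)) = Submodule.map W.mkQ ⊤ := hmtop.symm
    _ = Submodule.map W.mkQ (W ⊔ maximalIdeal A • ⊤) := by rw [h]
    _ = Submodule.map W.mkQ W ⊔ Submodule.map W.mkQ (maximalIdeal A • ⊤) :=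
        Submodule.map_sup _ _ _
    _ = Submodule.map W.mkQ (maximalIdeal A • ⊤) := by rw [hWbot, bot_sup_eq]
    _ = maximalIdeal A • Submodule.map W.mkQ ⊤ := Submodule.map_smul'' _ _ _
    _ = maximalIdeal A • ⊤ := by rw [hmtop]
    _ ≤ maximalIdeal A • ⊤ := le_rfl
  have hfg : (⊤ : Submodule A (M ⧸ W)).FG := by
    haveI : Module.Finite A (M ⧸ W) := Module.Finite.quotient A W
    exact Module.finite_def.1 inferInstance
  have hbot : (⊤ : Submodule A (M ⧸ W)) = ⊥ :=
    Submodule.eq_bot_of_le_smul_of_le_jacobson_bot (maximalIdeal A) ⊤ hfg hsm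
      (by rw [jacobson_eq_maximalIdeal (⊥ : Ideal A) bot_ne_top])
  constructor
  intro a b
  have ha : a ∈ (⊥ : Submodule A (M ⧸ W)) := hbot ▸ Submodule.mem_top
  have hb : b ∈ (⊥ : Submodule A (M ⧸ W)) := hbot ▸ Submodule.mem_top
  rw [Submodule.mem_bot] at ha hb
  rw [ha, hb]

variable [IsLocalRing R] [IsNoetherianRing R]

set_option maxHeartbeats 1000000 in
lemma main_case2 (hdim : ringKrullDim R = 1)
    (hm : maximalIdeal R ∉ associatedPrimes R R)
    (N : Type) [AddCommGroup N] [Module R N] [Module.Finite R N] (r : ℕ)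
    (hrk : HasRankN R N r) : clM (R := R) N = 0 := by
  classical
  have hfin := ass_finite hdim hm
  set s : Finset (Ideal R) := hfin.toFinset with hs
  -- avoidance elements
  have hEex : ∀ p, p ∈ s → ∃ e : R, e ∉ p ∧ ∀ q ∈ s, q ≠ p → e ∈ q := by
    intro p hp
    have hpA : p ∈ associatedPrimes R R := hfin.mem_toFinset.1 hp
    have hpmin : p ∈ minimalPrimes R := ass_subset_minimal hdim hm hpA
    have hinf : ¬ ((s.erase p).inf id ≤ p) := by
      intro hle
      obtain ⟨q, hq, hqle⟩ := (Ideal.IsPrime.inf_le' hpA.isPrime).1 hle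
      have hqA : q ∈ associatedPrimes R R := hfin.mem_toFinset.1 (Finset.mem_of_mem_erase hq)
      have hpq : p ≤ q := hpmin.2 ⟨hqA.isPrime, bot_le⟩ hqle
      exact (Finset.ne_of_mem_erase hq) (le_antisymm hqle hpq)
    obtain ⟨e, he1, he2⟩ : ∃ e, e ∈ (s.erase p).inf id ∧ e ∉ p := by
      by_contra hcon
      push_neg at hcon
      exact hinf hcon
    refine ⟨e, he2, fun q hq hqp => ?_⟩
    have hle := Finset.inf_le (f := (id : Ideal R → Ideal R)) (Finset.mem_erase.2 ⟨hqp, hq⟩)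
    exact hle he1
  choose E hE1 hE2 using hEex
  -- elements of N generating each localization
  have hBex : ∀ p, ∀ hp : p ∈ s, ∃ B : Fin r → N, ∀ (hpP : p.IsPrime),
      Submodule.span (Localization.AtPrime p)
        (Set.range fun j => LocalizedModule.mk (B j) (1 : p.primeCompl)) = ⊤ := by
    intro p hp
    have hpA : p ∈ associatedPrimes R R := hfin.mem_toFinset.1 hp
    haveI hpP := hpA.isPrime
    obtain ⟨ψ⟩ := hrk p hpP hpA
    have hrep : ∀ z : LocalizedModule p.primeCompl N, ∃ n t, z = LocalizedModule.mk n t :=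
      fun z => LocalizedModule.induction_on (fun n t => ⟨n, t, rfl⟩) z
    choose num den hnd using hrep
    refine ⟨fun j => num (ψ.symm (Pi.single j 1)), fun hpP' => ?_⟩
    rw [eq_top_iff]
    have hb : Submodule.span (Localization.AtPrime p)
        (Set.range fun j : Fin r => Pi.single j (1 : Localization.AtPrime p)) = ⊤ := by
      have hsp := (Pi.basisFun (Localization.AtPrime p) (Fin r)).span_eq
      rw [← hsp]
      congr 1
      ext z
      simp [Pi.basisFun_apply]
    have h1 : Submodule.span (Localization.AtPrime p)
        (Set.range fun j => ψ.symm (Pi.single j (1 : Localization.AtPrime p))) = ⊤ := by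
      have hrange : (Set.range fun j => ψ.symm (Pi.single j (1 : Localization.AtPrime p))) =
          ψ.symm '' (Set.range fun j : Fin r => Pi.single j (1 : Localization.AtPrime p)) := by
        rw [← Set.range_comp]; rfl
      rw [hrange, ← LinearEquiv.coe_coe, ← Submodule.map_span, hb, Submodule.map_top]
      exact LinearMap.range_eq_top.2 ψ.symm.surjective
    have hgen : ∀ j : Fin r, ψ.symm (Pi.single j 1) ∈
        Submodule.span (Localization.AtPrime p)
          (Set.range fun j => LocalizedModule.mk (num (ψ.symm (Pi.single j 1)))
            (1 : p.primeCompl)) := by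
      intro j
      have hmk : ψ.symm (Pi.single j 1) =
          Localization.mk 1 (den (ψ.symm (Pi.single j 1))) •
            LocalizedModule.mk (num (ψ.symm (Pi.single j 1))) (1 : p.primeCompl) := by
        rw [LocalizedModule.mk_smul_mk, one_smul, mul_one]
        exact hnd _
      rw [hmk]
      exact Submodule.smul_mem _ _ (Submodule.subset_span ⟨j, rfl⟩)
    rw [← h1, Submodule.span_le]
    rintro z ⟨j, rfl⟩
    exact hgen j
  choose B hB using hBex
  -- the generic elements and the map φ
  set nv : Fin r → N := fun j => ∑ p ∈ s.attach, E p.1 p.2 • B p.1 p.2 j with hnv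
  set φ : (Fin r → R) →ₗ[R] N := Fintype.linearCombination R nv with hφ
  -- per-prime key facts
  have hkey : ∀ p, p ∈ associatedPrimes R R → ∀ hpP : p.IsPrime,
      (∀ v : Fin r → R, φ v = 0 → ∃ t, t ∉ p ∧ t • v = 0) ∧
      (∀ c : N ⧸ LinearMap.range φ, ∃ t, t ∉ p ∧ t • c = 0) := by
    intro p hpA hpP
    have hp : p ∈ s := hfin.mem_toFinset.2 hpA
    haveI : Module.Finite (Localization.AtPrime p) (LocalizedModule p.primeCompl N) :=
      Module.Finite.of_isLocalizedModule p.primeCompl (LocalizedModule.mkLinearMap p.primeCompl N)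
    set ξ : (Fin r → Localization.AtPrime p) →ₗ[Localization.AtPrime p]
        LocalizedModule p.primeCompl N :=
      Fintype.linearCombination (Localization.AtPrime p)
        (fun j => LocalizedModule.mk (nv j) (1 : p.primeCompl)) with hξ
    have hmknv : ∀ j, (LocalizedModule.mk (nv j) (1 : p.primeCompl)
          : LocalizedModule p.primeCompl N) =
        ∑ q ∈ s.attach, algebraMap R (Localization.AtPrime p) (E q.1 q.2) •
          LocalizedModule.mk (B q.1 q.2 j) (1 : p.primeCompl) := by
      intro j
      have h0 : (LocalizedModule.mk (nv j) (1 : p.primeCompl)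
            : LocalizedModule p.primeCompl N) =
          (LocalizedModule.mkLinearMap p.primeCompl N) (nv j) := rfl
      rw [h0, hnv]
      simp only [map_sum, map_smul]
      refine Finset.sum_congr rfl ?_
      intro q _
      rw [algebraMap_smul]
      rfl
    -- surjectivity of ξ via Nakayama
    have hξsurj : LinearMap.range ξ = ⊤ := by
      rw [hξ, Fintype.range_linearCombination]
      apply sup_smul_top_eq_top (A := Localization.AtPrime p)
      rw [eq_top_iff]
      refine le_trans (hB p hp hpP).ge ?_
      rw [Submodule.span_le]
      rintro z ⟨j, rfl⟩
      set u : Localization.AtPrime p := algebraMap R _ (E p hp) with hu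
      have huu : IsUnit u := IsLocalization.map_units _ (⟨E p hp, hE1 p hp⟩ : p.primeCompl)
      have hmem : u • (LocalizedModule.mk (B p hp j) (1 : p.primeCompl)
            : LocalizedModule p.primeCompl N) ∈
          Submodule.span (Localization.AtPrime p)
            (Set.range fun j => LocalizedModule.mk (nv j) (1 : p.primeCompl)) ⊔
            maximalIdeal (Localization.AtPrime p) • ⊤ := by
        have hsum := hmknv j
        rw [← Finset.add_sum_erase _ _ (Finset.mem_attach s ⟨p, hp⟩)] at hsum
        have hsplit : u • (LocalizedModule.mk (B p hp j) (1 : p.primeCompl)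
              : LocalizedModule p.primeCompl N) =
            LocalizedModule.mk (nv j) (1 : p.primeCompl) -
              ∑ q ∈ s.attach.erase ⟨p, hp⟩,
                algebraMap R (Localization.AtPrime p) (E q.1 q.2) •
                  LocalizedModule.mk (B q.1 q.2 j) (1 : p.primeCompl) := by
        -- hsum : mk (nv j) 1 = u • mk (B p hp j) 1 + Σ_erase …
          rw [hsum]
          abel
        rw [hsplit]
        refine Submodule.sub_mem _ ?_ ?_
        · exact Submodule.mem_sup_left (Submodule.subset_span ⟨j, rfl⟩)
        · refine Submodule.mem_sup_right (Submodule.sum_mem _ ?_)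
          intro q hq
          have hqnep : q.1 ≠ p := by
            intro hqp
            exact (Finset.ne_of_mem_erase hq) (Subtype.ext hqp)
          have hEq : E q.1 q.2 ∈ p := hE2 q.1 q.2 p hp (Ne.symm hqnep)
          have halg : algebraMap R (Localization.AtPrime p) (E q.1 q.2) ∈
              maximalIdeal (Localization.AtPrime p) :=
            (IsLocalization.AtPrime.to_map_mem_maximal_iff _ p _).2 hEq
          exact Submodule.smul_mem_smul halg Submodule.mem_top
      have h2 := Submodule.smul_mem _ (((huu.unit⁻¹ : _) : Localization.AtPrime p)) hmem
      rw [smul_smul, IsUnit.val_inv_mul, one_smul] at h2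
      exact h2
    obtain ⟨ψ⟩ := hrk p hpP hpA
    have hξinj : Function.Injective ξ :=
      OrzechProperty.injective_of_surjective_of_injective ψ.symm.toLinearMap ξ
        ψ.symm.injective (LinearMap.range_eq_top.1 hξsurj)
    constructor
    · -- injectivity transfer: elements of the kernel of φ are torsion at p
      intro v hv
      have hξv : ξ (fun j => algebraMap R (Localization.AtPrime p) (v j)) = 0 := by
        have happ : ξ (fun j => algebraMap R (Localization.AtPrime p) (v j)) =
            ∑ j, algebraMap R (Localization.AtPrime p) (v j) •
              LocalizedModule.mk (nv j) (1 : p.primeCompl) := rfl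
        rw [happ]
        have hterm : ∀ j, algebraMap R (Localization.AtPrime p) (v j) •
            (LocalizedModule.mk (nv j) (1 : p.primeCompl) : LocalizedModule p.primeCompl N) =
            LocalizedModule.mk (v j • nv j) (1 : p.primeCompl) := by
          intro j
          rw [algebraMap_smul (Localization.AtPrime p) (v j)
            (LocalizedModule.mk (nv j) (1 : p.primeCompl))]
          exact LocalizedModule.smul'_mk _ _ _
        calc ∑ j, algebraMap R (Localization.AtPrime p) (v j) •
              (LocalizedModule.mk (nv j) (1 : p.primeCompl) : LocalizedModule p.primeCompl N)
            = ∑ j, LocalizedModule.mk (v j • nv j) (1 : p.primeCompl) := by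
              refine Finset.sum_congr rfl fun j _ => hterm j
          _ = (LocalizedModule.mkLinearMap p.primeCompl N) (∑ j, v j • nv j) := by
              rw [map_sum]; rfl
          _ = (LocalizedModule.mkLinearMap p.primeCompl N) (φ v) := by
              rw [show φ v = ∑ j, v j • nv j from rfl]
          _ = 0 := by rw [hv, map_zero]
      have hv0 : (fun j => algebraMap R (Localization.AtPrime p) (v j)) = 0 := by
        apply hξinj
        rw [hξv, map_zero]
      have hvj : ∀ j, ∃ m : p.primeCompl, (m : R) * v j = 0 := by
        intro j
        have := congrFun hv0 j
        exact (IsLocalization.map_eq_zero_iff p.primeCompl (Localization.AtPrime p) (v j)).1 this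
      choose w hw using hvj
      refine ⟨∏ j, (w j : R), ?_, ?_⟩
      · intro hmem
        obtain ⟨j, _, hj⟩ := (Ideal.IsPrime.prod_mem_iff).1 hmem
        exact (w j).2 hj
      · funext j
        have hdecomp : (∏ i, (w i : R)) = (w j : R) * ∏ i ∈ Finset.univ.erase j, (w i : R) :=
          (Finset.mul_prod_erase Finset.univ _ (Finset.mem_univ j)).symm
        have hz : (∏ i, (w i : R)) • v j = 0 := by
          rw [smul_eq_mul, hdecomp, mul_comm ((w j : R)) _, mul_assoc, hw j, mul_zero]
        rw [Pi.smul_apply, Pi.zero_apply]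
        exact hz
    · -- cokernel is torsion at p
      intro c
      obtain ⟨n, rfl⟩ := Submodule.Quotient.mk_surjective _ c
      let T : Submodule (Localization.AtPrime p) (LocalizedModule p.primeCompl N) :=
        { carrier := {z | ∃ (b : Fin r → R) (u : p.primeCompl),
            z = LocalizedModule.mk (φ b) u}
          add_mem' := by
            rintro z z' ⟨b, u, rfl⟩ ⟨b', u', rfl⟩
            refine ⟨(u' : R) • b + (u : R) • b', u * u', ?_⟩
            rw [LocalizedModule.mk_add_mk]
            rw [map_add, map_smul, map_smul, Submonoid.smul_def, Submonoid.smul_def]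
          zero_mem' := ⟨0, 1, by rw [map_zero, LocalizedModule.zero_mk]⟩
          smul_mem' := by
            intro c z hz
            obtain ⟨b, u, rfl⟩ := hz
            refine Localization.induction_on c ?_
            rintro ⟨a, t⟩
            refine ⟨a • b, t * u, ?_⟩
            rw [LocalizedModule.mk_smul_mk, map_smul] }
      have hle : LinearMap.range ξ ≤ T := by
        rw [hξ, Fintype.range_linearCombination, Submodule.span_le]
        rintro z ⟨j, rfl⟩
        refine ⟨Pi.single j 1, 1, ?_⟩
        rw [show φ (Pi.single j 1) = (1 : R) • nv j from
          Fintype.linearCombination_apply_single (v := fun i => nv i) R j 1, one_smul]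
      have hmkT : (LocalizedModule.mk n (1 : p.primeCompl) : LocalizedModule p.primeCompl N)
          ∈ T := hle (hξsurj ▸ Submodule.mem_top)
      obtain ⟨b, u, heq⟩ := hmkT
      obtain ⟨cc, hcc⟩ := LocalizedModule.mk_eq.1 heq
      refine ⟨(cc : R) * (u : R), ?_, ?_⟩
      · intro hmem
        rcases hpP.mem_or_mem hmem with h | h
        · exact cc.2 h
        · exact u.2 h
      · have hrange : ((cc : R) * (u : R)) • n ∈ LinearMap.range φ := by
          have h1 : ((cc : R) * (u : R)) • n = φ ((cc : R) • b) := by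
            have h2 : cc • u • n = cc • (1 : p.primeCompl) • φ b := hcc
            have h3 : ((cc : R) * (u : R)) • n = (cc : R) • (u : R) • n := (smul_smul _ _ _).symm
            rw [h3]
            have h4 : (cc : R) • (u : R) • n = (cc : R) • φ b := by
              have h5 : cc • u • n = (cc : R) • (u : R) • n := by
                rw [Submonoid.smul_def, Submonoid.smul_def]
              have h6 : cc • (1 : p.primeCompl) • φ b = (cc : R) • φ b := by
                rw [Submonoid.smul_def, Submonoid.smul_def, OneMemClass.coe_one, one_smul]
              rw [← h5, h2, h6]
            rw [h4, ← map_smul]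
          exact h1 ▸ LinearMap.mem_range_self φ _
        rw [← Submodule.Quotient.mk_smul, Submodule.Quotient.mk_eq_zero]
        exact hrange
  -- the kernel of φ is trivial
  have hker : LinearMap.ker φ = ⊥ := by
    by_contra hk
    haveI : Nontrivial (LinearMap.ker φ) := Submodule.nontrivial_iff_ne_bot.2 hk
    obtain ⟨P, hP⟩ := associatedPrimes.nonempty R (LinearMap.ker φ)
    obtain ⟨hPp, y, hy⟩ := isAssociatedPrime_iff.1 hP
    have hann : ∀ a : R, a ∈ P ↔ a • (y : Fin r → R) = 0 := by
      intro a
      rw [hy, Submodule.mem_colon_singleton, Submodule.mem_bot]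
      constructor
      · intro h
        have := congrArg (Subtype.val) h
        simpa using this
      · intro h
        exact Subtype.ext (by simpa using h)
    have hPinf : ∀ a : R, a ∈ P ↔ ∀ j, a • (y : Fin r → R) j = 0 := by
      intro a
      rw [hann]
      constructor
      · intro h j
        rw [← Pi.smul_apply, h, Pi.zero_apply]
      · intro h
        funext j
        rw [Pi.smul_apply, h j, Pi.zero_apply]
    have hPeq : P = Finset.univ.inf
        (fun j => (Submodule.span R {(y : Fin r → R) j}).annihilator) := by
      ext a
      rw [hPinf, Submodule.mem_finsetInf]
      constructor
      · intro h j _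
        rw [Submodule.mem_annihilator_span_singleton]
        exact h j
      · intro h j
        have := h j (Finset.mem_univ j)
        rwa [Submodule.mem_annihilator_span_singleton] at this
    obtain ⟨j0, -, hj0le⟩ := (Ideal.IsPrime.inf_le' hPp).1 (hPeq.ge)
    have hle2 : P ≤ (Submodule.span R {(y : Fin r → R) j0}).annihilator := by
      rw [hPeq]
      exact Finset.inf_le (Finset.mem_univ j0)
    have hPann : P = (Submodule.span R {(y : Fin r → R) j0}).annihilator :=
      le_antisymm hle2 hj0le
    have hPA : P ∈ associatedPrimes R R := isAssociatedPrime_iff.2 ⟨hPp, (y : Fin r → R) j0, by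
      rw [hPann]; ext a
      rw [Submodule.mem_colon_singleton, Submodule.mem_bot, Submodule.mem_annihilator_span_singleton]⟩
    have hyker : φ (y : Fin r → R) = 0 := LinearMap.mem_ker.1 y.2
    obtain ⟨t, htp, htv⟩ := (hkey P hPA hPp).1 (y : Fin r → R) hyker
    exact htp ((hann t).2 htv)
  -- the cokernel is torsion, supported at the maximal ideal
  have hCzero : clM (R := R) (N ⧸ LinearMap.range φ) = 0 := by
    by_cases hCtriv : Subsingleton (N ⧸ LinearMap.range φ)
    · exact clM_subsingleton
    · have hCnt : Nontrivial (N ⧸ LinearMap.range φ) :=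
        not_subsingleton_iff_nontrivial.1 hCtriv
      set J := (⊤ : Submodule R (N ⧸ LinearMap.range φ)).annihilator with hJ
      have hJprime : ∀ P : Ideal R, P.IsPrime → J ≤ P → P = maximalIdeal R := by
        intro P hP hJP
        by_contra hne
        have hPA : P ∈ associatedPrimes R R := minimal_isAssociated (prime_minimal hdim hP hne)
        obtain ⟨k, g, hg⟩ := Module.Finite.exists_fin (R := R) (M := N ⧸ LinearMap.range φ)
        choose tt htt1 htt2 using fun i => (hkey P hPA hP).2 (g i)
        have ht0 : (∏ i, tt i) ∉ P := by
          intro hmem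
          obtain ⟨i, -, hi⟩ := (Ideal.IsPrime.prod_mem_iff).1 hmem
          exact htt1 i hi
        have ht0J : (∏ i, tt i) ∈ J := by
          rw [hJ, Submodule.mem_annihilator]
          intro c _
          have hc : c ∈ Submodule.span R (Set.range g) := by
            rw [hg]; exact Submodule.mem_top
          refine Submodule.span_induction ?_ ?_ ?_ ?_ hc
          · rintro z ⟨i, rfl⟩
            have hdec : (∏ i, tt i) = tt i * ∏ i' ∈ Finset.univ.erase i, tt i' :=
              (Finset.mul_prod_erase Finset.univ _ (Finset.mem_univ i)).symm
            rw [hdec, mul_comm, mul_smul, htt2 i, smul_zero]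
          · exact smul_zero _
          · intro z w _ _ hz hw
            rw [smul_add, hz, hw, add_zero]
          · intro a z _ hz
            rw [smul_comm, hz, smul_zero]
        exact ht0 (hJP ht0J)
      have hJm : maximalIdeal R ≤ J.radical := by
        rw [Ideal.radical_eq_sInf]
        refine le_sInf ?_
        rintro K ⟨hJK, hKp⟩
        rw [hJprime K hKp hJK]
      obtain ⟨n2, hn2⟩ := Ideal.exists_pow_le_of_le_radical_of_fg hJm
        (IsNoetherian.noetherian _)
      have htor : ∀ a ∈ (maximalIdeal R) ^ n2, ∀ c : N ⧸ LinearMap.range φ, a • c = 0 := by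
        intro a ha c
        have haJ : a ∈ J := hn2 ha
        rw [hJ, Submodule.mem_annihilator] at haJ
        exact haJ c Submodule.mem_top
      obtain ⟨d, hdeq, -⟩ := clM_torsion_pow n2 (N ⧸ LinearMap.range φ) htor
      rw [hdeq, clM_resF_zero hdim hm, smul_zero]
  -- assemble the final exact sequence
  have hinj : Function.Injective φ := by
    rw [← LinearMap.ker_eq_bot]
    exact hker
  have hadd := clM_additive (R := R) φ (LinearMap.range φ).mkQ hinj
    (Submodule.Quotient.mk_surjective _) (by rw [Submodule.ker_mkQ])
  rw [hadd, clM_pi_ring, hCzero, zero_add]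

end AuxCG

end AuxG5
noncomputable section AuxG6

namespace AuxCG

open Submodule IsLocalRing

variable {R : Type} [CommRing R] [IsLocalRing R]

lemma main_case1 (hm : maximalIdeal R ∈ associatedPrimes R R)
    (N : Type) [AddCommGroup N] [Module R N] [Module.Finite R N] (r : ℕ)
    (hrk : HasRankN R N r) : clM (R := R) N = 0 := by
  haveI : (maximalIdeal R).IsPrime := (maximalIdeal.isMaximal R).isPrime
  obtain ⟨ψ⟩ := hrk (maximalIdeal R) inferInstance hm
  have hunit : ∀ t : (maximalIdeal R).primeCompl, IsUnit (t : R) := by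
    intro t
    by_contra hu
    exact t.2 ((mem_maximalIdeal _).2 hu)
  have hbij : Function.Bijective
      (LocalizedModule.mkLinearMap (maximalIdeal R).primeCompl N) := by
    constructor
    · intro a b hab
      obtain ⟨u, hu⟩ := LocalizedModule.mk_eq.1 hab
      have h1 : (u : R) • a = (u : R) • b := by
        simpa [Submonoid.smul_def, OneMemClass.coe_one, one_smul] using hu
      have h2 := congrArg (fun z => (((hunit u).unit⁻¹ : Rˣ) : R) • z) h1
      simpa [smul_smul, IsUnit.val_inv_mul] using h2
    · intro z
      refine LocalizedModule.induction_on ?_ z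
      intro n t
      refine ⟨(((hunit t).unit⁻¹ : Rˣ) : R) • n, ?_⟩
      show LocalizedModule.mk ((((hunit t).unit⁻¹ : Rˣ) : R) • n) 1 = LocalizedModule.mk n t
      rw [LocalizedModule.mk_eq]
      refine ⟨1, ?_⟩
      simp only [Submonoid.smul_def, OneMemClass.coe_one, one_smul, smul_smul]
      rw [IsUnit.mul_val_inv, one_smul]
  let e1 : N ≃ₗ[R] LocalizedModule (maximalIdeal R).primeCompl N :=
    LinearEquiv.ofBijective _ hbij
  let e2 : LocalizedModule (maximalIdeal R).primeCompl N ≃ₗ[R]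
      (Fin r → Localization.AtPrime (maximalIdeal R)) := ψ.restrictScalars R
  have hle : (maximalIdeal R).primeCompl ≤ IsUnit.submonoid R := fun x hx => hunit ⟨x, hx⟩
  let α : R ≃ₐ[R] Localization.AtPrime (maximalIdeal R) :=
    IsLocalization.atUnits R (maximalIdeal R).primeCompl hle
  let e3 : (Fin r → Localization.AtPrime (maximalIdeal R)) ≃ₗ[R] (Fin r → R) :=
    LinearEquiv.piCongrRight (fun _ => α.toLinearEquiv.symm)
  rw [clM_congr (e1.trans (e2.trans e3)), clM_pi_ring]

lemma domain_hasRank [IsDomain R] (N : Type) [AddCommGroup N] [Module R N]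
    [Module.Finite R N] : ∃ r, HasRankN R N r := by
  haveI hbp : (⊥ : Ideal R).IsPrime := Ideal.bot_prime
  have hfield : IsField (Localization.AtPrime (⊥ : Ideal R)) := by
    refine ⟨?_, mul_comm, ?_⟩
    · have hinj : Function.Injective
          (algebraMap R (Localization.AtPrime (⊥ : Ideal R))) := by
        apply IsLocalization.injective (M := (⊥ : Ideal R).primeCompl)
        intro x hx
        exact mem_nonZeroDivisors_of_ne_zero hx
      exact ⟨algebraMap R _ 1, algebraMap R _ 0, fun h => one_ne_zero (hinj h)⟩
    · intro a ha
      obtain ⟨⟨x, t⟩, hx⟩ := IsLocalization.surj (⊥ : Ideal R).primeCompl a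
      have hx0 : x ≠ 0 := by
        intro h0
        apply ha
        have htu : IsUnit (algebraMap R (Localization.AtPrime (⊥ : Ideal R)) (t : R)) :=
          IsLocalization.map_units _ t
        have : a * algebraMap R (Localization.AtPrime (⊥ : Ideal R)) (t : R) = 0 := by
          rw [hx, h0, map_zero]
        rcases mul_eq_zero.1 this with h | h
        · exact h
        · exact absurd h htu.ne_zero
          -- htu.ne_zero needs nontrivial; handle below
      have hxu : IsUnit (algebraMap R (Localization.AtPrime (⊥ : Ideal R)) x) :=
        IsLocalization.map_units _ (⟨x, hx0⟩ : (⊥ : Ideal R).primeCompl)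
      refine ⟨algebraMap R _ (t : R) * ((hxu.unit⁻¹ : _) : Localization.AtPrime (⊥ : Ideal R)), ?_⟩
      rw [← mul_assoc, hx, IsUnit.mul_val_inv]
  letI : Field (Localization.AtPrime (⊥ : Ideal R)) := hfield.toField
  haveI : Module.Finite (Localization.AtPrime (⊥ : Ideal R))
      (LocalizedModule (⊥ : Ideal R).primeCompl N) :=
    Module.Finite.of_isLocalizedModule (⊥ : Ideal R).primeCompl
      (LocalizedModule.mkLinearMap (⊥ : Ideal R).primeCompl N)
  set r := Module.finrank (Localization.AtPrime (⊥ : Ideal R))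
    (LocalizedModule (⊥ : Ideal R).primeCompl N) with hr
  let b := Module.finBasis (Localization.AtPrime (⊥ : Ideal R))
    (LocalizedModule (⊥ : Ideal R).primeCompl N)
  refine ⟨r, ?_⟩
  intro p hp hpA
  have hpbot : p = ⊥ := by
    obtain ⟨hprime, x, hx⟩ := hpA
    rcases eq_or_ne x 0 with rfl | hx0
    · exfalso
      apply hprime.ne_top
      rw [hx, Ideal.radical_eq_top, Ideal.eq_top_iff_one, Submodule.mem_colon_singleton, smul_zero]
      exact Submodule.zero_mem _
    · rw [hx]
      suffices hcol : (⊥ : Submodule R R).colon {x} = ⊥ by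
        rw [hcol, Ideal.radical_bot_of_isReduced]
      ext a
      rw [Submodule.mem_colon_singleton, Submodule.mem_bot, smul_eq_mul, Submodule.mem_bot]
      constructor
      · intro h
        rcases mul_eq_zero.1 h with h | h
        · exact h
        · exact absurd h hx0
      · intro h
        rw [h, zero_mul]
  subst hpbot
  exact ⟨b.equivFun⟩

end AuxCG

end AuxG6
namespace AuxCG

lemma class_zero_main {R : Type} [CommRing R] [IsNoetherianRing R] [IsLocalRing R]
    (hdim : ringKrullDim R = 1) (N : Type) [AddCommGroup N] [Module R N]
    [Module.Finite R N] (r : ℕ) (hrk : HasRankN R N r) : ClassZeroQ R N := by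
  intro x hx
  obtain ⟨e⟩ := hx
  have h1 : AuxCG.clM (R := R) N = AuxCG.cls R x := AuxCG.clM_eq_cls x e
  have h2 : AuxCG.clM (R := R) N = 0 := by
    by_cases hm : IsLocalRing.maximalIdeal R ∈ associatedPrimes R R
    · exact AuxCG.main_case1 hm N r hrk
    · exact AuxCG.main_case2 hdim hm N r hrk
  show AuxCG.cls R x = 0
  rw [← h1]
  exact h2

end AuxCG

theorem class_zero_of_rank_one_dim
    (R : Type) [CommRing R] [IsNoetherianRing R] [IsLocalRing R]
    (hdim : ringKrullDim R = 1) :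
    (∀ (N : Type) [AddCommGroup N] [Module R N] [Module.Finite R N] (r : ℕ), HasRankN R N r → ClassZeroQ R N) ∧
    (IsDomain R → ∀ (N : Type) [AddCommGroup N] [Module R N] [Module.Finite R N], ClassZeroQ R N) :=
  ⟨fun N _ _ _ r hrk => AuxCG.class_zero_main hdim N r hrk,
   fun hdom N _ _ _ => by
    haveI := hdom
    obtain ⟨r, hrk⟩ := AuxCG.domain_hasRank (R := R) N
    exact AuxCG.class_zero_main hdim N r hrk⟩
end
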